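/- arXiv:2107.02800 — 5 statements merged into one kernel-verified Lean document; each statement's English description precedes it below -/
import Mathlib

section
/- For every integer k ≥ 0 and every complex number z, the functions f_k satisfy the three-term recurrence f_k(z) − (1 + z/(k+1))·f_{k+1}(z) + (z/(k+2))·f_{k+2}(z) = 0. -/
open scoped Nat

/-- `f k z = e^{-z} · ₁F₁(1; k+1; z) = e^{-z} · Σ_{r=0}^∞ k! z^r / (r+k)!`. -/
noncomputable def rieszF (k : ℕ) (z : ℂ) : ℂ :=
  Complex.exp (-z) * ∑' r : ℕ, (k ! : ℂ) * z ^ r / (r + k)!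

lemma rieszF_summable (k : ℕ) (z : ℂ) :
    Summable (fun r : ℕ => (k ! : ℂ) * z ^ r / (r + k)!) := by
  apply Summable.of_norm
  apply Summable.of_nonneg_of_le (fun r => norm_nonneg _) (fun r => ?_)
    ((Real.summable_pow_div_factorial ‖z‖).mul_left (k ! : ℝ))
  rw [norm_div, norm_mul, norm_pow]
  simp only [Complex.norm_natCast]
  rw [mul_div_assoc]
  apply mul_le_mul_of_nonneg_left _ (by positivity)
  apply div_le_div_of_nonneg_left (by positivity) (by positivity)
  exact_mod_cast Nat.factorial_le (Nat.le_add_right r k)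

lemma rieszF_aux (k : ℕ) (z : ℂ) :
    z / ((k : ℂ) + 1) * ∑' r : ℕ, ((k + 1)! : ℂ) * z ^ r / (r + (k + 1))! =
      (∑' r : ℕ, (k ! : ℂ) * z ^ r / (r + k)!) - 1 := by
  rw [← tsum_mul_left, Summable.tsum_eq_zero_add (rieszF_summable k z)]
  have h0 : (k ! : ℂ) * z ^ 0 / ((0 : ℕ) + k)! = 1 := by
    simp [div_self, Nat.cast_ne_zero.mpr (Nat.factorial_ne_zero k)]
  rw [h0, add_sub_cancel_left]
  apply tsum_congr
  intro r
  have hk : ((k : ℂ) + 1) ≠ 0 := Nat.cast_add_one_ne_zero k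
  have e1 : r + 1 + k = r + (k + 1) := by omega
  rw [e1, show (k + 1)! = (k + 1) * k ! from Nat.factorial_succ k]
  have hf : (((r + (k + 1))! : ℕ) : ℂ) ≠ 0 :=
    Nat.cast_ne_zero.mpr (Nat.factorial_ne_zero _)
  push_cast
  field_simp
  ring

theorem rieszF_three_term_recurrence (k : ℕ) (z : ℂ) :
    rieszF k z - (1 + z / ((k : ℂ) + 1)) * rieszF (k + 1) z
      + (z / ((k : ℂ) + 2)) * rieszF (k + 2) z = 0 := by
  have h1 := rieszF_aux k z
  have h2 := rieszF_aux (k + 1) z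
  push_cast at h2
  unfold rieszF
  linear_combination Complex.exp (-z) * h2 - Complex.exp (-z) * h1
end

section
/- For every integer k ≥ 2 there exists a polynomial g_k with rational coefficients of degree k − 2 such that e_k(z)·e_k(−z) = 1 − z^k·g_k(z)/k! for all complex z; equivalently, for all real z ≥ 0, 1/e_k(z) = e_k(−z) + z^k·g_k(z)/(k!·e_k(z)). In particular g_2(z) = 2, g_3(z) = −(3/2)z, g_4(z) = 2 + (2/3)z², g_5(z) = −(5/3)z − (5/24)z³ and g_6(z) = 2 + (3/4)z² + (1/20)z⁴. -/
open scoped Nat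
open Polynomial Finset

noncomputable def expPartial {K : Type*} [DivisionRing K] (k : ℕ) (z : K) : K :=
  ∑ r ∈ Finset.range k, z ^ r / r !

noncomputable def Epos (k : ℕ) : ℚ[X] := ∑ r ∈ Finset.range k, C ((r ! : ℚ)⁻¹) * X ^ r
noncomputable def Eneg (k : ℕ) : ℚ[X] := ∑ r ∈ Finset.range k, C ((-1)^r * (r ! : ℚ)⁻¹) * X ^ r
noncomputable def Qk (k : ℕ) : ℚ[X] := C (k ! : ℚ) * (1 - Epos k * Eneg k)

lemma aeval_Epos {K : Type*} [Field K] [Algebra ℚ K] (k : ℕ) (z : K) :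
    aeval z (Epos k) = expPartial k z := by
  rw [Epos, expPartial, map_sum]
  refine Finset.sum_congr rfl fun r _ => ?_
  rw [map_mul, aeval_C, map_pow, aeval_X, map_inv₀, map_natCast, div_eq_mul_inv, mul_comm]

lemma aeval_Eneg {K : Type*} [Field K] [Algebra ℚ K] (k : ℕ) (z : K) :
    aeval z (Eneg k) = expPartial k (-z) := by
  rw [Eneg, expPartial, map_sum]
  refine Finset.sum_congr rfl fun r _ => ?_
  rw [map_mul, aeval_C, map_pow, aeval_X, map_mul, map_pow, map_neg, map_one, map_inv₀,
    map_natCast, neg_pow, div_eq_mul_inv]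
  ring

lemma coeff_Epos (k n : ℕ) : (Epos k).coeff n = if n < k then ((n ! : ℚ))⁻¹ else 0 := by
  simp [Epos, Polynomial.finset_sum_coeff, Polynomial.coeff_C_mul, Polynomial.coeff_X_pow,
    Finset.sum_ite_eq, Finset.mem_range]

lemma coeff_Eneg (k n : ℕ) :
    (Eneg k).coeff n = if n < k then (-1)^n * ((n ! : ℚ))⁻¹ else 0 := by
  simp only [Eneg, Polynomial.finset_sum_coeff, Polynomial.coeff_C_mul, Polynomial.coeff_X_pow,
    mul_ite, mul_one, mul_zero]
  rw [Finset.sum_ite_eq]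
  simp [Finset.mem_range]

lemma key_sum (n : ℕ) :
    ∑ i ∈ Finset.range (n+1), ((i ! : ℚ)⁻¹ * ((-1)^(n-i) * (((n-i)! : ℚ))⁻¹))
      = if n = 0 then 1 else 0 := by
  have h1 : ∑ i ∈ Finset.range (n+1), ((i ! : ℚ)⁻¹ * ((-1)^(n-i) * (((n-i)! : ℚ))⁻¹))
      = (∑ i ∈ Finset.range (n+1), (1:ℚ)^i * (-1)^(n-i) * n.choose i) / n ! := by
    rw [Finset.sum_div]
    refine Finset.sum_congr rfl fun i hi => ?_
    have hi' : i ≤ n := by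
      have := Finset.mem_range.mp hi; omega
    rw [Nat.cast_choose ℚ hi']
    have h0 : (i ! : ℚ) ≠ 0 := Nat.cast_ne_zero.mpr (Nat.factorial_ne_zero i)
    have h0' : (((n-i)! : ℚ)) ≠ 0 := Nat.cast_ne_zero.mpr (Nat.factorial_ne_zero _)
    have h0'' : ((n ! : ℚ)) ≠ 0 := Nat.cast_ne_zero.mpr (Nat.factorial_ne_zero _)
    field_simp
    ring
  rw [h1, ← add_pow]
  norm_num
  rcases Nat.eq_zero_or_pos n with h | h
  · simp [h]
  · simp [h.ne', zero_pow h.ne']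

lemma coeff_prod_lt (k n : ℕ) (hn : n < k) :
    (Epos k * Eneg k).coeff n = if n = 0 then 1 else 0 := by
  rw [Polynomial.coeff_mul]
  have h1 : ∀ p ∈ Finset.HasAntidiagonal.antidiagonal n,
      (Epos k).coeff p.1 * (Eneg k).coeff p.2
        = (p.1 ! : ℚ)⁻¹ * ((-1)^p.2 * ((p.2 ! : ℚ))⁻¹) := by
    intro p hp
    have hp' := Finset.HasAntidiagonal.mem_antidiagonal.mp hp
    rw [coeff_Epos, coeff_Eneg, if_pos (by omega), if_pos (by omega)]
  rw [Finset.sum_congr rfl h1, Finset.Nat.sum_antidiagonal_eq_sum_range_succ_mk]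
  exact key_sum n

lemma coeff_Qk_lt (k n : ℕ) (hn : n < k) : (Qk k).coeff n = 0 := by
  rw [Qk, Polynomial.coeff_C_mul, Polynomial.coeff_sub, coeff_prod_lt k n hn,
    Polynomial.coeff_one]
  simp

lemma natDegree_Epos_le (k : ℕ) (hk : 1 ≤ k) : (Epos k).natDegree ≤ k - 1 := by
  rw [Polynomial.natDegree_le_iff_coeff_eq_zero]
  intro N hN
  rw [coeff_Epos, if_neg (by omega)]

lemma natDegree_Eneg_le (k : ℕ) (hk : 1 ≤ k) : (Eneg k).natDegree ≤ k - 1 := by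
  rw [Polynomial.natDegree_le_iff_coeff_eq_zero]
  intro N hN
  rw [coeff_Eneg, if_neg (by omega)]

lemma coeff_prod_top (k : ℕ) (hk : 2 ≤ k) :
    (Epos k * Eneg k).coeff (2*k-2)
      = ((k-1)! : ℚ)⁻¹ * ((-1)^(k-1) * (((k-1)! : ℚ))⁻¹) := by
  rw [Polynomial.coeff_mul]
  rw [Finset.sum_eq_single ((k-1), (k-1))]
  · rw [coeff_Epos, coeff_Eneg, if_pos (by omega), if_pos (by omega)]
  · intro p hp hne
    have hp' := Finset.HasAntidiagonal.mem_antidiagonal.mp hp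
    rw [coeff_Epos, coeff_Eneg]
    by_cases h1 : p.1 < k
    · have h2 : ¬ p.2 < k := by
        intro h2
        apply hne
        have : p.1 = k - 1 ∧ p.2 = k - 1 := by omega
        exact Prod.ext this.1 this.2
      rw [if_neg h2, mul_zero]
    · rw [if_neg h1, zero_mul]
  · intro h
    exact absurd (Finset.HasAntidiagonal.mem_antidiagonal.mpr (by omega)) h

lemma coeff_Qk_top (k : ℕ) (hk : 2 ≤ k) : (Qk k).coeff (2*k-2) ≠ 0 := by
  rw [Qk, Polynomial.coeff_C_mul, Polynomial.coeff_sub, coeff_prod_top k hk,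
    Polynomial.coeff_one, if_neg (by omega)]
  have h1 : ((k ! : ℚ)) ≠ 0 := Nat.cast_ne_zero.mpr (Nat.factorial_ne_zero _)
  have h2 : (((k-1)! : ℚ)) ≠ 0 := Nat.cast_ne_zero.mpr (Nat.factorial_ne_zero _)
  have h3 : ((-1 : ℚ))^(k-1) ≠ 0 := by
    simp
  intro h
  apply h1
  field_simp at h
  simp only [zero_mul, zero_sub, mul_neg, neg_eq_zero, mul_eq_zero] at h
  exact h.resolve_right h3

lemma cancelX {k : ℕ} {g h : ℚ[X]} (e1 : Qk k = X ^ k * g) (e2 : Qk k = X ^ k * h) :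
    g = h :=
  mul_left_cancel₀ (pow_ne_zero k Polynomial.X_ne_zero) (e1.symm.trans e2)

lemma natDegree_Qk (k : ℕ) (hk : 2 ≤ k) : (Qk k).natDegree = 2*k-2 := by
  have hle : (Qk k).natDegree ≤ 2*k-2 := by
    have h1 := natDegree_Epos_le k (by omega)
    have h2 := natDegree_Eneg_le k (by omega)
    have h3 : (Epos k * Eneg k).natDegree ≤ 2*k-2 :=
      le_trans (Polynomial.natDegree_mul_le) (by omega)
    have h4 : ((1 : ℚ[X]) - Epos k * Eneg k).natDegree ≤ 2*k-2 :=
      le_trans (Polynomial.natDegree_sub_le _ _) (by simp; omega)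
    exact le_trans (Polynomial.natDegree_C_mul_le _ _) h4
  have hge : 2*k-2 ≤ (Qk k).natDegree :=
    Polynomial.le_natDegree_of_ne_zero (coeff_Qk_top k hk)
  omega

theorem exists_gk (k : ℕ) (hk : 2 ≤ k) :
    ∃ g : Polynomial ℚ, g.natDegree = k - 2 ∧
      (∀ z : ℂ, expPartial k z * expPartial k (-z) = 1 - z ^ k * aeval z g / k !) ∧
      (∀ z : ℝ, 0 ≤ z →
        1 / expPartial k z = expPartial k (-z) + z ^ k * aeval z g / (k ! * expPartial k z)) ∧
      (k = 2 → g = C 2) ∧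
      (k = 3 → g = C (-(3/2)) * X) ∧
      (k = 4 → g = C 2 + C (2/3) * X ^ 2) ∧
      (k = 5 → g = C (-(5/3)) * X + C (-(5/24)) * X ^ 3) ∧
      (k = 6 → g = C 2 + C (3/4) * X ^ 2 + C (1/20) * X ^ 4) := by
  have hdvd : X ^ k ∣ Qk k := by
    rw [Polynomial.X_pow_dvd_iff]
    exact fun d hd => coeff_Qk_lt k d hd
  obtain ⟨g, hg⟩ := hdvd
  have hfact : ((k ! : ℚ)) ≠ 0 := Nat.cast_ne_zero.mpr (Nat.factorial_ne_zero _)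
  have hQne : Qk k ≠ 0 := fun h => coeff_Qk_top k hk (by rw [h]; simp)
  have hgne : g ≠ 0 := fun h => hQne (by rw [hg, h, mul_zero])
  have hdeg : g.natDegree = k - 2 := by
    have h1 : (Qk k).natDegree = k + g.natDegree := by
      rw [hg, Polynomial.natDegree_mul (pow_ne_zero _ Polynomial.X_ne_zero) hgne,
        Polynomial.natDegree_X_pow]
    have h2 := natDegree_Qk k hk
    omega
  -- generic evaluation identity
  have hmain : ∀ {K : Type} [Field K] [Algebra ℚ K] [CharZero K] (z : K),
      expPartial k z * expPartial k (-z) = 1 - z ^ k * aeval z g / k ! := by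
    intro K _ _ _ z
    have hfK : ((k ! : K)) ≠ 0 := by
      exact_mod_cast Nat.cast_ne_zero.mpr (Nat.factorial_ne_zero k)
    have h1 : aeval z (Qk k) = (k ! : K) * (1 - expPartial k z * expPartial k (-z)) := by
      rw [Qk]
      simp [aeval_Epos, aeval_Eneg, map_sub]
    have h2 : aeval z (Qk k) = z ^ k * aeval z g := by
      rw [hg]; simp
    rw [h2] at h1
    field_simp
    linear_combination h1
  refine ⟨g, hdeg, fun z => hmain z, ?_, ?_, ?_, ?_, ?_, ?_⟩
  · intro z hz
    have hpos : 0 < expPartial k z := by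
      refine Finset.sum_pos' (fun i _ => by positivity) ⟨0, Finset.mem_range.mpr (by omega), ?_⟩
      norm_num
    have h := hmain z
    have hfR : ((k ! : ℝ)) ≠ 0 := Nat.cast_ne_zero.mpr (Nat.factorial_ne_zero _)
    have h' : (k ! : ℝ) * (expPartial k z * expPartial k (-z))
        = (k ! : ℝ) - z ^ k * aeval z g := by
      rw [h, mul_sub, mul_one, mul_div_cancel₀ _ hfR]
    field_simp
    linear_combination -h'

  all_goals {
    intro hk'
    subst hk'
    refine cancelX hg ?_
    apply Polynomial.funext
    intro x
    simp [Qk, Epos, Eneg, Finset.sum_range_succ, Nat.factorial]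
    ring
  }
end

section
/- For all integers m ≥ 1 and p ≥ 2 and every real x ≥ 0, the series Σ_{k=0}^∞ (−1)^{k−1} x^k/(k!·ζ(mk+p)) and Σ_{n=1}^∞ (μ(n)/n^p)·(1 − e^{−x/n^m}) both converge absolutely, and Σ_{k=0}^∞ (−1)^{k−1} x^k/(k!·ζ(mk+p)) = Σ_{n=1}^∞ (μ(n)/n^p)·(1 − e^{−x/n^m}) − 1/ζ(p). -/
open scoped Nat ArithmeticFunction ArithmeticFunction.Moebius

open scoped LSeries.notation

open ArithmeticFunction in
lemma moebius_helper (s : ℕ) (hs : 2 ≤ s) :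
    Summable (fun n : ℕ => (μ (n + 1) : ℂ) / ((n : ℂ) + 1) ^ s) ∧
    ∑' n : ℕ, (μ (n + 1) : ℂ) / ((n : ℂ) + 1) ^ s = 1 / riemannZeta s := by
  have hre : 1 < ((s : ℂ)).re := by
    simp only [Complex.natCast_re, Nat.one_lt_cast]
    omega
  have hsum : LSeriesSummable ↗μ (s : ℂ) := LSeriesSummable_moebius_iff.mpr hre
  have hterm : ∀ n : ℕ, LSeries.term ↗μ (s : ℂ) (n + 1) =
      (μ (n + 1) : ℂ) / ((n : ℂ) + 1) ^ s := by
    intro n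
    rw [LSeries.term_of_ne_zero (Nat.succ_ne_zero n)]
    push_cast
    rw [Complex.cpow_natCast]
  have hsum' : Summable (fun n : ℕ => (μ (n + 1) : ℂ) / ((n : ℂ) + 1) ^ s) := by
    have := (summable_nat_add_iff 1).mpr hsum
    simpa only [hterm] using this
  refine ⟨hsum', ?_⟩
  have hL : LSeries ↗μ (s : ℂ) = 1 / riemannZeta s := by
    have h1 := LSeries_one_mul_Lseries_moebius hre
    rw [LSeries_one_eq_riemannZeta hre] at h1
    exact eq_one_div_of_mul_eq_one_right h1
  have h0 := Summable.tsum_eq_zero_add hsum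
  rw [LSeries.term_zero, zero_add] at h0
  calc ∑' n : ℕ, (μ (n + 1) : ℂ) / ((n : ℂ) + 1) ^ s
      = ∑' n : ℕ, LSeries.term ↗μ (s : ℂ) (n + 1) := by simp only [hterm]
    _ = LSeries ↗μ (s : ℂ) := h0.symm
    _ = 1 / riemannZeta s := hL

lemma exp_helper (y : ℂ) :
    ∑' k : ℕ, (-1 : ℂ) ^ (k + 1) * y ^ k / k ! = -Complex.exp (-y) := by
  rw [Complex.exp_eq_exp_ℂ, NormedSpace.exp_eq_tsum_div, ← tsum_neg]
  congr 1
  funext k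
  rw [neg_pow, pow_succ]
  ring

theorem riesz_series_eq_moebius_series (m p : ℕ) (hm : 1 ≤ m) (hp : 2 ≤ p)
    (x : ℝ) (hx : 0 ≤ x) :
    Summable (fun k : ℕ =>
      ‖(-1 : ℂ) ^ (k + 1) * (x : ℂ) ^ k / (k ! * riemannZeta (m * k + p))‖) ∧
    Summable (fun n : ℕ =>
      ‖(μ (n + 1) : ℂ) / ((n : ℂ) + 1) ^ p *
        (1 - Complex.exp (-(x : ℂ) / ((n : ℂ) + 1) ^ m))‖) ∧
    ∑' k : ℕ, (-1 : ℂ) ^ (k + 1) * (x : ℂ) ^ k / (k ! * riemannZeta (m * k + p)) =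
      (∑' n : ℕ, (μ (n + 1) : ℂ) / ((n : ℂ) + 1) ^ p *
        (1 - Complex.exp (-(x : ℂ) / ((n : ℂ) + 1) ^ m))) - 1 / riemannZeta p := by
  -- the double-sum term
  set F : ℕ → ℕ → ℂ := fun k n =>
    (-1 : ℂ) ^ (k + 1) * (x : ℂ) ^ k / k ! *
      ((μ (n + 1) : ℂ) / ((n : ℂ) + 1) ^ (m * k + p)) with hF_def
  have hnz : ∀ n : ℕ, ((n : ℂ) + 1) ≠ 0 := fun n => Nat.cast_add_one_ne_zero n
  -- norm computation
  have hμnorm : ∀ n : ℕ, ‖((μ (n + 1) : ℤ) : ℂ)‖ = |((μ (n + 1) : ℤ) : ℝ)| := fun n => by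
    rw [Complex.norm_intCast]
  have hnorm : ∀ k n : ℕ, ‖F k n‖ =
      x ^ k / k ! * (|((μ (n + 1) : ℤ) : ℝ)| / ((n : ℝ) + 1) ^ (m * k + p)) := by
    intro k n
    have h1 : ‖((n : ℂ) + 1)‖ = (n : ℝ) + 1 := by
      have h2 : ((n : ℂ) + 1) = ((n + 1 : ℕ) : ℂ) := by push_cast; ring
      rw [h2, Complex.norm_natCast]; push_cast; ring
    simp only [hF_def, norm_mul, norm_div, norm_pow, norm_neg, norm_one, one_pow, one_mul,
      Complex.norm_natCast, Complex.norm_real, Real.norm_eq_abs, abs_of_nonneg hx, h1,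
      hμnorm n]
  -- bound for the double sum
  have hmu : ∀ n : ℕ, |((μ (n + 1) : ℤ) : ℝ)| ≤ 1 := by
    intro n
    have h := ArithmeticFunction.abs_moebius_le_one (n := n + 1)
    exact_mod_cast h
  have hbound : ∀ k n : ℕ, ‖F k n‖ ≤ x ^ k / k ! * (1 / ((n : ℝ) + 1) ^ p) := by
    intro k n
    rw [hnorm k n]
    have h1 : (0 : ℝ) < (n : ℝ) + 1 := by positivity
    have h2 : ((n : ℝ) + 1) ^ p ≤ ((n : ℝ) + 1) ^ (m * k + p) :=
      pow_le_pow_right₀ (by linarith [Nat.cast_nonneg (α := ℝ) n]) (Nat.le_add_left p (m * k))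
    refine mul_le_mul_of_nonneg_left ?_ (by positivity)
    exact div_le_div₀ zero_le_one (hmu n) (by positivity) h2
  have h1p : Summable (fun n : ℕ => 1 / ((n : ℝ) + 1) ^ p) := by
    have h0 : Summable (fun n : ℕ => 1 / (n : ℝ) ^ p) :=
      Real.summable_one_div_nat_pow.mpr (by omega)
    have h := (summable_nat_add_iff 1).mpr h0
    exact h.congr (fun n => by push_cast; ring)
  have hg : Summable (fun q : ℕ × ℕ => x ^ q.1 / q.1 ! * (1 / ((q.2 : ℝ) + 1) ^ p)) :=
    Summable.mul_of_nonneg (f := fun k : ℕ => x ^ k / k !)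
      (g := fun n : ℕ => 1 / ((n : ℝ) + 1) ^ p)
      (Real.summable_pow_div_factorial x) h1p
      (fun k => by positivity) (fun n => by positivity)
  have hFnorm : Summable (fun q : ℕ × ℕ => ‖F q.1 q.2‖) :=
    Summable.of_nonneg_of_le (fun q => norm_nonneg _) (fun q => hbound q.1 q.2) hg
  have hF : Summable (Function.uncurry F) := by
    apply Summable.of_norm
    exact hFnorm
  -- fiberwise sums over n (rows)
  have hrow : ∀ k : ℕ, (∑' n : ℕ, F k n) =
      (-1 : ℂ) ^ (k + 1) * (x : ℂ) ^ k / (k ! * riemannZeta (m * k + p)) := by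
    intro k
    obtain ⟨hs, he⟩ := moebius_helper (m * k + p) (by omega)
    rw [hF_def]
    simp only
    rw [tsum_mul_left, he, div_mul_div_comm, mul_one]
    norm_cast
  -- fiberwise sums over k (columns)
  have hcol : ∀ n : ℕ, (∑' k : ℕ, F k n) =
      (μ (n + 1) : ℂ) / ((n : ℂ) + 1) ^ p *
        (-Complex.exp (-(x : ℂ) / ((n : ℂ) + 1) ^ m)) := by
    intro n
    have hne := hnz n
    have hrw : ∀ k : ℕ, F k n = (μ (n + 1) : ℂ) / ((n : ℂ) + 1) ^ p *
        ((-1 : ℂ) ^ (k + 1) * ((x : ℂ) / ((n : ℂ) + 1) ^ m) ^ k / k !) := by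
      intro k
      rw [hF_def]
      simp only
      rw [div_pow, ← pow_mul]
      have hk : ((k ! : ℂ)) ≠ 0 := Nat.cast_ne_zero.mpr k.factorial_ne_zero
      field_simp
      ring
    calc (∑' k : ℕ, F k n)
        = ∑' k : ℕ, (μ (n + 1) : ℂ) / ((n : ℂ) + 1) ^ p *
            ((-1 : ℂ) ^ (k + 1) * ((x : ℂ) / ((n : ℂ) + 1) ^ m) ^ k / k !) := by
          exact tsum_congr hrw
      _ = (μ (n + 1) : ℂ) / ((n : ℂ) + 1) ^ p *
            ∑' k : ℕ, (-1 : ℂ) ^ (k + 1) * ((x : ℂ) / ((n : ℂ) + 1) ^ m) ^ k / k ! :=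
          tsum_mul_left
      _ = (μ (n + 1) : ℂ) / ((n : ℂ) + 1) ^ p *
            (-Complex.exp (-(x : ℂ) / ((n : ℂ) + 1) ^ m)) := by
          rw [exp_helper, neg_div]
  -- summability of the three goal series
  obtain ⟨hμp, hμpe⟩ := moebius_helper p hp
  have hexp_le : ∀ n : ℕ, ‖Complex.exp (-(x : ℂ) / ((n : ℂ) + 1) ^ m)‖ ≤ 1 := by
    intro n
    have : (-(x : ℂ) / ((n : ℂ) + 1) ^ m) = ((-x / ((n : ℝ) + 1) ^ m : ℝ) : ℂ) := by
      push_cast; ring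
    rw [this, Complex.norm_exp, Complex.ofReal_re]
    apply Real.exp_le_one_iff.2
    have h1 : (0:ℝ) < ((n : ℝ) + 1) ^ m := by positivity
    exact div_nonpos_of_nonpos_of_nonneg (neg_nonpos.mpr hx) (le_of_lt h1)
  have hGnorm : Summable (fun n : ℕ =>
      ‖(μ (n + 1) : ℂ) / ((n : ℂ) + 1) ^ p *
        (1 - Complex.exp (-(x : ℂ) / ((n : ℂ) + 1) ^ m))‖) := by
    have hb2 : Summable (fun n : ℕ => 1 / ((n : ℝ) + 1) ^ p * 2) := h1p.mul_right 2
    refine Summable.of_nonneg_of_le (fun n => norm_nonneg _) (fun n => ?_) hb2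
    ·
      rw [norm_mul]
      have h1 : ‖(μ (n + 1) : ℂ) / ((n : ℂ) + 1) ^ p‖ ≤ 1 / ((n : ℝ) + 1) ^ p := by
        have h2 : ((n : ℂ) + 1) = ((n + 1 : ℕ) : ℂ) := by push_cast; ring
        rw [norm_div, norm_pow, h2, Complex.norm_natCast, hμnorm n]
        push_cast
        have hpos : (0 : ℝ) < ((n : ℝ) + 1) ^ p := by positivity
        gcongr
        exact hmu n
      have h3 : ‖1 - Complex.exp (-(x : ℂ) / ((n : ℂ) + 1) ^ m)‖ ≤ 2 := by
        calc ‖1 - Complex.exp (-(x : ℂ) / ((n : ℂ) + 1) ^ m)‖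
            ≤ ‖(1 : ℂ)‖ + ‖Complex.exp (-(x : ℂ) / ((n : ℂ) + 1) ^ m)‖ := norm_sub_le _ _
          _ ≤ 1 + 1 := by rw [norm_one]; exact add_le_add le_rfl (hexp_le n)
          _ = 2 := by norm_num
      exact mul_le_mul h1 h3 (norm_nonneg _) (by positivity)
  have hG : Summable (fun n : ℕ =>
      (μ (n + 1) : ℂ) / ((n : ℂ) + 1) ^ p *
        (1 - Complex.exp (-(x : ℂ) / ((n : ℂ) + 1) ^ m))) := hGnorm.of_norm
  -- row norms summable
  have hrowsum : Summable (fun k : ℕ => ∑' n : ℕ, ‖F k n‖) :=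
    ((summable_prod_of_nonneg (fun q => norm_nonneg _)).mp hFnorm).2
  have hAnorm : Summable (fun k : ℕ =>
      ‖(-1 : ℂ) ^ (k + 1) * (x : ℂ) ^ k / (k ! * riemannZeta (m * k + p))‖) := by
    apply Summable.of_nonneg_of_le (fun k => norm_nonneg _) _ hrowsum
    intro k
    rw [← hrow k]
    exact norm_tsum_le_tsum_norm (((summable_prod_of_nonneg
      (fun q => norm_nonneg _)).mp hFnorm).1 k)
  refine ⟨hAnorm, hGnorm, ?_⟩
  -- main computation
  have hswap : ∑' k : ℕ, ∑' n : ℕ, F k n = ∑' n : ℕ, ∑' k : ℕ, F k n :=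
    (Summable.tsum_comm hF).symm
  calc ∑' k : ℕ, (-1 : ℂ) ^ (k + 1) * (x : ℂ) ^ k / (k ! * riemannZeta (m * k + p))
      = ∑' k : ℕ, ∑' n : ℕ, F k n := by
        exact tsum_congr fun k => (hrow k).symm
    _ = ∑' n : ℕ, ∑' k : ℕ, F k n := hswap
    _ = ∑' n : ℕ, (μ (n + 1) : ℂ) / ((n : ℂ) + 1) ^ p *
          (-Complex.exp (-(x : ℂ) / ((n : ℂ) + 1) ^ m)) := tsum_congr hcol
    _ = ∑' n : ℕ, ((μ (n + 1) : ℂ) / ((n : ℂ) + 1) ^ p *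
          (1 - Complex.exp (-(x : ℂ) / ((n : ℂ) + 1) ^ m)) -
          (μ (n + 1) : ℂ) / ((n : ℂ) + 1) ^ p) := by
        exact tsum_congr fun n => by ring
    _ = (∑' n : ℕ, (μ (n + 1) : ℂ) / ((n : ℂ) + 1) ^ p *
          (1 - Complex.exp (-(x : ℂ) / ((n : ℂ) + 1) ^ m))) -
          ∑' n : ℕ, (μ (n + 1) : ℂ) / ((n : ℂ) + 1) ^ p := Summable.tsum_sub hG hμp
    _ = (∑' n : ℕ, (μ (n + 1) : ℂ) / ((n : ℂ) + 1) ^ p *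
          (1 - Complex.exp (-(x : ℂ) / ((n : ℂ) + 1) ^ m))) - 1 / riemannZeta p := by
        rw [hμpe]
end

section
/- For every real x ≥ 0, the series Σ_{k=1}^∞ (−1)^{k−1} x^k/(k!·ζ(2k+1)) and Σ_{n=1}^∞ (μ(n)/n)·(1 − e^{−x/n²}) both converge absolutely and are equal: Σ_{k=1}^∞ (−1)^{k−1} x^k/(k!·ζ(2k+1)) = Σ_{n=1}^∞ (μ(n)/n)·(1 − e^{−x/n²}). -/
open scoped Nat ArithmeticFunction ArithmeticFunction.Moebius
open Complex ArithmeticFunction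

noncomputable def HLF (x : ℝ) (k n : ℕ) : ℂ :=
  ((-1 : ℂ) ^ k * (x : ℂ) ^ (k + 1) / ((k + 1)! : ℂ)) *
    ((μ (n + 1) : ℂ) / (((n + 1 : ℕ) : ℂ)) ^ (2 * k + 3))

noncomputable def HLg (x : ℝ) (k n : ℕ) : ℝ :=
  x ^ (k + 1) / (k + 1)! * (1 / (((n + 1 : ℕ) : ℝ)) ^ (2 * k + 3))

lemma HLg_nonneg (x : ℝ) (hx : 0 ≤ x) (k n : ℕ) : 0 ≤ HLg x k n := by
  unfold HLg; positivity

lemma norm_HLF_le (x : ℝ) (hx : 0 ≤ x) (k n : ℕ) : ‖HLF x k n‖ ≤ HLg x k n := by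
  unfold HLF HLg
  rw [norm_mul, norm_div, norm_div, norm_mul, norm_pow, norm_pow, norm_pow]
  simp only [norm_neg, norm_one, one_pow, Complex.norm_real, Complex.norm_natCast, one_mul,
    Real.norm_eq_abs, _root_.abs_of_nonneg hx]
  gcongr
  rw [show ((μ (n+1) : ℤ) : ℂ) = (((μ (n+1) : ℤ) : ℝ) : ℂ) by push_cast; ring,
    Complex.norm_real, Real.norm_eq_abs, ← Int.cast_abs]
  exact_mod_cast (abs_moebius_le_one (n := n+1))

lemma HL_row_summable (x : ℝ) (k : ℕ) : Summable fun n => HLg x k n := by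
  unfold HLg
  apply Summable.mul_left
  have : Summable fun n : ℕ => 1 / ((n : ℝ)) ^ (2 * k + 3) :=
    Real.summable_one_div_nat_pow.mpr (by omega)
  exact_mod_cast (summable_nat_add_iff 1).mpr this

lemma HL_sum2_summable : Summable fun n : ℕ => 1 / (((n + 1 : ℕ) : ℝ)) ^ 2 := by
  have : Summable fun n : ℕ => 1 / ((n : ℝ)) ^ 2 := Real.summable_one_div_nat_pow.mpr one_lt_two
  exact_mod_cast (summable_nat_add_iff 1).mpr this

lemma HL_tsum_row_le (x : ℝ) (hx : 0 ≤ x) (k : ℕ) :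
    ∑' n, HLg x k n ≤ (∑' n : ℕ, 1 / (((n + 1 : ℕ) : ℝ)) ^ 2) * (x ^ (k + 1) / (k + 1)!) := by
  simp only [HLg]
  rw [tsum_mul_left, mul_comm]
  gcongr ?_ * _
  refine Summable.tsum_le_tsum (fun n => ?_) ?_ HL_sum2_summable
  · gcongr
    · exact_mod_cast Nat.one_le_iff_ne_zero.mpr (Nat.succ_ne_zero n)
    · omega
  · have : Summable fun n : ℕ => 1 / ((n : ℝ)) ^ (2 * k + 3) :=
      Real.summable_one_div_nat_pow.mpr (by omega)
    exact_mod_cast (summable_nat_add_iff 1).mpr this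

lemma HLg_summable (x : ℝ) (hx : 0 ≤ x) : Summable (Function.uncurry (HLg x)) := by
  refine (summable_prod_of_nonneg fun p => HLg_nonneg x hx p.1 p.2).mpr
    ⟨fun k => HL_row_summable x k, ?_⟩
  refine Summable.of_nonneg_of_le (fun k => tsum_nonneg fun n => HLg_nonneg x hx k n)
    (fun k => HL_tsum_row_le x hx k) ?_
  exact ((summable_nat_add_iff 1).mpr (Real.summable_pow_div_factorial x)).mul_left _

lemma HLF_summable (x : ℝ) (hx : 0 ≤ x) : Summable (Function.uncurry (HLF x)) :=
  Summable.of_norm_bounded (HLg_summable x hx) (fun p => norm_HLF_le x hx p.1 p.2)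

lemma HLF_norm_summable (x : ℝ) (hx : 0 ≤ x) :
    Summable (Function.uncurry fun k n => ‖HLF x k n‖) :=
  Summable.of_nonneg_of_le (fun p => norm_nonneg _) (fun p => norm_HLF_le x hx p.1 p.2)
    (HLg_summable x hx)

lemma HL_row_eq (x : ℝ) (k : ℕ) :
    (-1 : ℂ) ^ k * (x : ℂ) ^ (k + 1) / ((k + 1)! * riemannZeta (2 * k + 3)) =
      ∑' n, HLF x k n := by
  have hcast : (2 * (k : ℂ) + 3) = (((2 * k + 3 : ℕ) : ℂ)) := by push_cast; ring
  have hs : 1 < ((((2 * k + 3 : ℕ) : ℂ))).re := by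
    rw [Complex.natCast_re]
    exact_mod_cast by omega
  have hz : (riemannZeta (((2 * k + 3 : ℕ) : ℂ)))⁻¹ = LSeries (fun n => (μ n : ℂ)) _ :=
    inv_eq_of_mul_eq_one_right (by
      rw [← LSeries_zeta_eq_riemannZeta hs]
      exact LSeries_zeta_mul_Lseries_moebius hs)
  have hsum := (LSeriesSummable_moebius_iff.mpr hs)
  have hLS : LSeries (fun n => (μ n : ℂ)) (((2 * k + 3 : ℕ) : ℂ)) =
      ∑' n : ℕ, (μ (n + 1) : ℂ) / (((n + 1 : ℕ) : ℂ)) ^ (2 * k + 3) := by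
    rw [LSeries, Summable.tsum_eq_zero_add hsum]
    rw [LSeries.term_zero, zero_add]
    refine tsum_congr fun n => ?_
    rw [LSeries.term_of_ne_zero (Nat.succ_ne_zero n), Complex.cpow_natCast]
  have hzne : riemannZeta (((2 * k + 3 : ℕ) : ℂ)) ≠ 0 := riemannZeta_ne_zero_of_one_lt_re hs
  simp only [HLF]
  rw [tsum_mul_left, ← hLS, ← hz, hcast]
  rw [div_eq_mul_inv, mul_inv, div_eq_mul_inv]
  ring

lemma HL_exp_eq (t : ℂ) :
    ∑' k : ℕ, (-1 : ℂ) ^ k * t ^ (k + 1) / ((k + 1)! : ℂ) = 1 - Complex.exp (-t) := by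
  have hsum : Summable fun j : ℕ => (-t) ^ j / (j ! : ℂ) :=
    NormedSpace.expSeries_div_summable (-t)
  have hexp : Complex.exp (-t) = ∑' j : ℕ, (-t) ^ j / (j ! : ℂ) := by
    rw [Complex.exp_eq_exp_ℂ, NormedSpace.exp_eq_tsum_div]
  rw [hexp, Summable.tsum_eq_zero_add hsum]
  simp only [pow_zero, Nat.factorial_zero, Nat.cast_one, div_one]
  rw [eq_sub_iff_add_eq]
  have : ∑' k : ℕ, (-1 : ℂ) ^ k * t ^ (k + 1) / ((k + 1)! : ℂ)
      = - ∑' k : ℕ, (-t) ^ (k + 1) / ((k + 1)! : ℂ) := by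
    rw [← tsum_neg]
    refine tsum_congr fun k => ?_
    rw [neg_pow, pow_succ]
    ring
  rw [this]
  ring

lemma HL_col_eq (x : ℝ) (n : ℕ) :
    ∑' k, HLF x k n =
      (μ (n + 1) : ℂ) / ((n : ℂ) + 1) * (1 - Complex.exp (-(x : ℂ) / ((n : ℂ) + 1) ^ 2)) := by
  set c : ℂ := (n : ℂ) + 1 with hc
  have hc0 : c ≠ 0 := by
    rw [hc]
    exact Nat.cast_add_one_ne_zero n
  set t : ℂ := (x : ℂ) / c ^ 2 with ht
  have harg : -(x : ℂ) / ((n : ℂ) + 1) ^ 2 = -t := by rw [ht, ← hc, neg_div]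
  have hterm : ∀ k : ℕ, HLF x k n =
      (μ (n + 1) : ℂ) / c * ((-1 : ℂ) ^ k * t ^ (k + 1) / ((k + 1)! : ℂ)) := by
    intro k
    have hfac : ((k + 1)! : ℂ) ≠ 0 := by exact_mod_cast (Nat.factorial_ne_zero (k + 1))
    rw [HLF, ht, div_pow]
    have hcn : ((n + 1 : ℕ) : ℂ) = c := by rw [hc]; push_cast; ring
    rw [hcn]
    have hpow : c ^ (2 * k + 3) = c * (c ^ 2) ^ (k + 1) := by
      rw [← pow_mul, ← pow_succ']
      congr 1
    rw [hpow]
    field_simp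
  rw [tsum_congr hterm, tsum_mul_left, HL_exp_eq, harg]

lemma HL_rowsum_summable (x : ℝ) (hx : 0 ≤ x) : Summable fun k => ∑' n, HLg x k n :=
  Summable.of_nonneg_of_le (fun k => tsum_nonneg fun n => HLg_nonneg x hx k n)
    (fun k => HL_tsum_row_le x hx k)
    (((summable_nat_add_iff 1).mpr (Real.summable_pow_div_factorial x)).mul_left _)

theorem hardy_littlewood_series_eq_moebius_series (x : ℝ) (hx : 0 ≤ x) :
    Summable (fun k : ℕ =>
      ‖(-1 : ℂ) ^ k * (x : ℂ) ^ (k + 1) / ((k + 1)! * riemannZeta (2 * k + 3))‖) ∧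
    Summable (fun n : ℕ =>
      ‖(μ (n + 1) : ℂ) / ((n : ℂ) + 1) *
        (1 - Complex.exp (-(x : ℂ) / ((n : ℂ) + 1) ^ 2))‖) ∧
    ∑' k : ℕ, (-1 : ℂ) ^ k * (x : ℂ) ^ (k + 1) / ((k + 1)! * riemannZeta (2 * k + 3)) =
      ∑' n : ℕ, (μ (n + 1) : ℂ) / ((n : ℂ) + 1) *
        (1 - Complex.exp (-(x : ℂ) / ((n : ℂ) + 1) ^ 2)) := by
  have hrow_norm : ∀ k, Summable fun n => ‖HLF x k n‖ :=
    fun k => (HLF_norm_summable x hx).prod_factor k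
  have hcol_norm : ∀ n, Summable fun k => ‖HLF x k n‖ :=
    fun n => (HLF_norm_summable x hx).prod_symm.prod_factor n
  have hcolg : ∀ n, Summable fun k => HLg x k n :=
    fun n => (HLg_summable x hx).prod_symm.prod_factor n
  refine ⟨?_, ?_, ?_⟩
  · refine Summable.of_nonneg_of_le (fun k => norm_nonneg _) (fun k => ?_)
      (HL_rowsum_summable x hx)
    rw [HL_row_eq x k]
    exact (norm_tsum_le_tsum_norm (hrow_norm k)).trans
      (Summable.tsum_le_tsum (fun n => norm_HLF_le x hx k n) (hrow_norm k) (HL_row_summable x k))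
  · refine Summable.of_nonneg_of_le (fun n => norm_nonneg _) (fun n => ?_)
      ((HLg_summable x hx).prod_symm.prod)
    rw [← HL_col_eq x n]
    exact (norm_tsum_le_tsum_norm (hcol_norm n)).trans
      (Summable.tsum_le_tsum (fun k => norm_HLF_le x hx k n) (hcol_norm n) (hcolg n))
  · calc ∑' k : ℕ, (-1 : ℂ) ^ k * (x : ℂ) ^ (k + 1) / ((k + 1)! * riemannZeta (2 * k + 3))
        = ∑' (k : ℕ) (n : ℕ), HLF x k n := tsum_congr (fun k => HL_row_eq x k)
      _ = ∑' (n : ℕ) (k : ℕ), HLF x k n := (Summable.tsum_comm (HLF_summable x hx)).symm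
      _ = _ := tsum_congr (fun n => HL_col_eq x n)
end

section
/- Let m ≥ 1 and p ≥ 2 be integers, let x > 0 be real, and let c be a real number with 0 < c < (p−1)/m. Then the generalised Riesz function admits the Mellin–Barnes integral representation S_{m,p}(x) = −(1/(2π)) ∫_{−∞}^{∞} Γ(c+it)·x^{−(c+it)} / ζ(p − m(c+it)) dt, the integral converging absolutely (for Re(s) = c one has Re(p − ms) = p − mc > 1, so ζ(p − ms) ≠ 0). -/
open scoped Nat
open MeasureTheory Complex

set_option maxHeartbeats 1000000


private lemma norm_Gamma_le {c : ℝ} (hc : 0 < c) (t : ℝ) :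
    ‖Complex.Gamma ((c : ℂ) + t * I)‖ ≤ Real.Gamma c := by
  have hre : ((c : ℂ) + t * I).re = c := by simp
  rw [Complex.Gamma_eq_integral (by rw [hre]; exact hc), Complex.GammaIntegral]
  calc ‖∫ x in Set.Ioi (0:ℝ), (Real.exp (-x) : ℂ) * (x:ℂ) ^ (((c:ℂ) + t * I) - 1)‖
      ≤ ∫ x in Set.Ioi (0:ℝ), ‖(Real.exp (-x) : ℂ) * (x:ℂ) ^ (((c:ℂ) + t * I) - 1)‖ :=
        norm_integral_le_integral_norm _
    _ = ∫ x in Set.Ioi (0:ℝ), Real.exp (-x) * x ^ (c - 1) := by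
        refine setIntegral_congr_fun measurableSet_Ioi fun x hx => ?_
        rw [norm_mul, Complex.norm_real, Real.norm_of_nonneg (Real.exp_nonneg _),
          Complex.norm_cpow_eq_rpow_re_of_pos hx]
        congr 2
        simp
    _ = Real.Gamma c := (Real.Gamma_eq_integral hc).symm

private lemma norm_Gamma_decay {c : ℝ} (hc : 0 < c) (t : ℝ) :
    ‖Complex.Gamma ((c : ℂ) + t * I)‖ ≤
      2 * (Real.Gamma c + Real.Gamma (c + 2)) / (1 + t ^ 2) := by
  have hA := Real.Gamma_pos_of_pos hc
  have hB := Real.Gamma_pos_of_pos (by linarith : (0:ℝ) < c + 2)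
  have ht2 : (0:ℝ) < 1 + t ^ 2 := by positivity
  by_cases h : t ^ 2 ≤ 1
  · have h1 := norm_Gamma_le hc t
    rw [le_div_iff₀ ht2]
    nlinarith [norm_nonneg (Complex.Gamma ((c : ℂ) + t * I))]
  · push_neg at h
    have hs0 : (c:ℂ) + t * I ≠ 0 := by
      intro hh; apply_fun Complex.re at hh; simp at hh; linarith
    have hs1 : ((c:ℂ) + t * I) + 1 ≠ 0 := by
      intro hh; apply_fun Complex.re at hh; simp at hh; linarith
    have key : Complex.Gamma ((c:ℂ) + t * I + 2)
        = ((c:ℂ) + t * I + 1) * (((c:ℂ) + t * I) * Complex.Gamma ((c:ℂ) + t * I)) := by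
      rw [show (c:ℂ) + t * I + 2 = ((c:ℂ) + t * I + 1) + 1 by ring,
        Complex.Gamma_add_one _ hs1, Complex.Gamma_add_one _ hs0]
    have h2 : ‖Complex.Gamma ((c:ℂ) + t * I + 2)‖ ≤ Real.Gamma (c + 2) := by
      have := norm_Gamma_le (show (0:ℝ) < c + 2 by linarith) t
      rw [show ((c + 2 : ℝ) : ℂ) + t * I = (c:ℂ) + t * I + 2 by push_cast; ring] at this
      exact this
    have him1 : |t| ≤ ‖(c:ℂ) + t * I‖ := by
      have := Complex.abs_im_le_norm ((c:ℂ) + t * I)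
      simpa using this
    have him2 : |t| ≤ ‖(c:ℂ) + t * I + 1‖ := by
      have := Complex.abs_im_le_norm ((c:ℂ) + t * I + 1)
      simpa using this
    have hkey : ‖Complex.Gamma ((c:ℂ) + t * I)‖ * (|t| * |t|) ≤ Real.Gamma (c + 2) := by
      calc ‖Complex.Gamma ((c:ℂ) + t * I)‖ * (|t| * |t|)
          ≤ ‖Complex.Gamma ((c:ℂ) + t * I)‖ * (‖(c:ℂ) + t * I + 1‖ * ‖(c:ℂ) + t * I‖) := by
            gcongr <;> first | exact norm_nonneg _ | assumption
        _ = ‖Complex.Gamma ((c:ℂ) + t * I + 2)‖ := by rw [key]; simp only [norm_mul]; ring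
        _ ≤ Real.Gamma (c + 2) := h2
    rw [le_div_iff₀ ht2]
    have habs : |t| * |t| = t ^ 2 := by rw [← abs_mul, ← sq, abs_sq]
    rw [habs] at hkey
    nlinarith [norm_nonneg (Complex.Gamma ((c : ℂ) + t * I))]

private lemma integrable_Gamma_line {c : ℝ} (hc : 0 < c) :
    Integrable (fun t : ℝ => Complex.Gamma ((c : ℂ) + t * I)) := by
  have hcont : Continuous fun t : ℝ => Complex.Gamma ((c : ℂ) + t * I) := by
    rw [continuous_iff_continuousAt]
    intro t
    refine (Complex.differentiableAt_Gamma _ fun n => ?_).continuousAt.comp (by fun_prop)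
    intro hh; apply_fun Complex.re at hh; simp at hh
    have : (0:ℝ) ≤ (n:ℝ) := Nat.cast_nonneg n
    linarith
  refine ((integrable_inv_one_add_sq.const_mul
      (2 * (Real.Gamma c + Real.Gamma (c + 2)))).mono' hcont.aestronglyMeasurable ?_)
  filter_upwards with t
  simpa [div_eq_mul_inv] using norm_Gamma_decay hc t



private lemma exp_mellin_integrable {c : ℝ} (hc : 0 < c) {y : ℝ} (hy : 0 < y) :
    Integrable (fun t : ℝ => Complex.Gamma ((c : ℂ) + t * I) *
      Complex.exp (-((c : ℂ) + t * I) * (Real.log y : ℂ))) := by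
  have h := (integrable_Gamma_line hc).bdd_mul
    (f := fun t : ℝ => Complex.exp (-((c : ℂ) + t * I) * (Real.log y : ℂ)))
    (Continuous.aestronglyMeasurable (by continuity)) (c := Real.exp (-c * Real.log y)) (Filter.Eventually.of_forall fun t => ?_)
  · simpa [mul_comm] using h
  · rw [Complex.norm_exp]
    apply le_of_eq
    congr 1
    simp [Complex.mul_re]

private lemma exp_mellin_inversion {c : ℝ} (hc : 0 < c) {y : ℝ} (hy : 0 < y) :
    ∫ t : ℝ, Complex.Gamma ((c : ℂ) + t * I) *
        Complex.exp (-((c : ℂ) + t * I) * (Real.log y : ℂ)) =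
      (2 * (Real.pi : ℂ)) * (Real.exp (-y) : ℂ) := by
  have hf : MellinConvergent (fun u : ℝ => (Real.exp (-u) : ℂ)) c := by
    have h := Complex.GammaIntegral_convergent (s := (c:ℂ)) (by simpa using hc)
    simpa [MellinConvergent, smul_eq_mul, mul_comm] using h
  have hmel : mellin (fun u : ℝ => (Real.exp (-u) : ℂ)) = Complex.GammaIntegral :=
    Complex.GammaIntegral_eq_mellin.symm
  have hFf : VerticalIntegrable (mellin fun u : ℝ => (Real.exp (-u) : ℂ)) c := by
    rw [hmel]
    exact (integrable_Gamma_line hc).congr (Filter.Eventually.of_forall fun t =>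
      (Complex.Gamma_eq_integral (by simpa using hc)))
  have hinv := mellinInv_mellin_eq c (fun u : ℝ => (Real.exp (-u) : ℂ)) hy hf hFf (by fun_prop)
  rw [hmel, mellinInv] at hinv
  have hrw : (fun t : ℝ => ((y : ℂ) ^ (-((c:ℂ) + t * I))) • Complex.GammaIntegral ((c:ℂ) + t * I))
      = fun t : ℝ => Complex.Gamma ((c : ℂ) + t * I) *
        Complex.exp (-((c : ℂ) + t * I) * (Real.log y : ℂ)) := by
    funext t
    rw [smul_eq_mul, ← Complex.Gamma_eq_integral (by simpa using hc),
      Complex.cpow_def_of_ne_zero (by exact_mod_cast hy.ne'), ← Complex.ofReal_log hy.le,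
      mul_comm ((Real.log y : ℂ)) _, mul_comm]
  rw [hrw] at hinv
  have hπ : (2 * Real.pi) ≠ 0 := by positivity
  have := congrArg (fun z : ℂ => (2 * Real.pi : ℝ) • z) hinv
  simp only [smul_smul, mul_one_div, div_self hπ, one_smul] at this
  rw [this, Complex.real_smul]
  push_cast
  ring

noncomputable def M : ℕ → ℂ := fun n => ((ArithmeticFunction.moebius n : ℤ) : ℂ)

theorem riesz_mellin_barnes (m p : ℕ) (hm : 1 ≤ m) (hp : 2 ≤ p)
    (x : ℝ) (hx : 0 < x) (c : ℝ) (hc0 : 0 < c) (hc1 : c < ((p : ℝ) - 1) / m) :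
    Integrable (fun t : ℝ =>
      Complex.Gamma ((c : ℂ) + t * I) *
        Complex.exp (-((c : ℂ) + t * I) * (Real.log x : ℂ)) /
          riemannZeta ((p : ℂ) - m * ((c : ℂ) + t * I))) ∧
    ∑' k : ℕ, (-1 : ℂ) ^ (k + 1) * (x : ℂ) ^ k / (k ! * riemannZeta (m * k + p)) =
      -(1 / (2 * Real.pi)) *
        ∫ t : ℝ, Complex.Gamma ((c : ℂ) + t * I) *
          Complex.exp (-((c : ℂ) + t * I) * (Real.log x : ℂ)) /
            riemannZeta ((p : ℂ) - m * ((c : ℂ) + t * I)) := by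
  have hm' : (0:ℝ) < m := by exact_mod_cast hm
  have hσ : 1 < (p:ℝ) - m * c := by
    have h := (lt_div_iff₀ hm').mp hc1
    linarith
  set σ0 : ℝ := (p:ℝ) - m * c with hσ0def
  -- real part on the vertical line
  have hres : ∀ t : ℝ, ((p:ℂ) - m * ((c:ℂ) + t * I)).re = σ0 := by
    intro t
    simp [Complex.sub_re, Complex.mul_re, Complex.add_re, Complex.add_im, Complex.mul_im,
      hσ0def]
  have hne1 : ∀ t : ℝ, 1 < ((p:ℂ) - m * ((c:ℂ) + t * I)).re := fun t => by
    rw [hres t]; exact hσ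
  -- inverse zeta as L-series of moebius
  have hzinv : ∀ s : ℂ, 1 < s.re → (riemannZeta s)⁻¹ = ∑' n : ℕ, LSeries.term M s n := by
    intro s hs
    have h1 := ArithmeticFunction.LSeries_zeta_mul_Lseries_moebius hs
    rw [ArithmeticFunction.LSeries_zeta_eq_riemannZeta hs] at h1
    exact (inv_eq_of_mul_eq_one_right h1).trans rfl
  -- summable norms
  have hsumM : ∀ s : ℂ, 1 < s.re → Summable fun n : ℕ => ‖LSeries.term M s n‖ := by
    intro s hs
    exact summable_norm_iff.mpr (ArithmeticFunction.LSeriesSummable_moebius_iff.mpr hs)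
  have hsumσ : Summable fun n : ℕ => ‖LSeries.term M ((σ0 : ℝ) : ℂ) n‖ :=
    hsumM _ (by simpa using hσ)
  set bigC : ℝ := ∑' n : ℕ, ‖LSeries.term M ((σ0 : ℝ) : ℂ) n‖ with hbigC
  have hnormt : ∀ (t : ℝ) (n : ℕ), ‖LSeries.term M ((p:ℂ) - m * ((c:ℂ) + t * I)) n‖
      = ‖LSeries.term M ((σ0 : ℝ) : ℂ) n‖ := by
    intro t n
    rw [LSeries.norm_term_eq, LSeries.norm_term_eq, hres t, Complex.ofReal_re]
  -- Integrability of the full integrand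
  have hbase : Integrable (fun t : ℝ => Complex.Gamma ((c:ℂ) + t * I) *
      Complex.exp (-((c:ℂ) + t * I) * (Real.log x : ℂ))) := exp_mellin_integrable hc0 hx
  have hζcont : Continuous fun t : ℝ => (riemannZeta ((p:ℂ) - m * ((c:ℂ) + t * I)))⁻¹ := by
    rw [continuous_iff_continuousAt]
    intro t
    have hne : (p:ℂ) - m * ((c:ℂ) + t * I) ≠ 1 := by
      intro h
      have h2 := hres t
      rw [h] at h2
      simp at h2
      linarith
    have hlin : ContinuousAt (fun t : ℝ => (p:ℂ) - m * ((c:ℂ) + t * I)) t := by fun_prop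
    have hcz : ContinuousAt (riemannZeta ∘ fun t : ℝ => (p:ℂ) - m * ((c:ℂ) + t * I)) t :=
      ContinuousAt.comp (differentiableAt_riemannZeta hne).continuousAt hlin
    exact ContinuousAt.inv₀ hcz (riemannZeta_ne_zero_of_one_lt_re (hne1 t))
  have hζbdd : ∀ t : ℝ, ‖(riemannZeta ((p:ℂ) - m * ((c:ℂ) + t * I)))⁻¹‖ ≤ bigC := by
    intro t
    rw [hzinv _ (hne1 t)]
    calc ‖∑' n : ℕ, LSeries.term M ((p:ℂ) - m * ((c:ℂ) + t * I)) n‖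
        ≤ ∑' n : ℕ, ‖LSeries.term M ((p:ℂ) - m * ((c:ℂ) + t * I)) n‖ :=
          norm_tsum_le_tsum_norm (hsumσ.congr fun n => (hnormt t n).symm)
      _ = bigC := tsum_congr (hnormt t)
  have hInt : Integrable (fun t : ℝ =>
      Complex.Gamma ((c : ℂ) + t * I) *
        Complex.exp (-((c : ℂ) + t * I) * (Real.log x : ℂ)) /
          riemannZeta ((p : ℂ) - m * ((c : ℂ) + t * I))) := by
    have h := hbase.bdd_mul hζcont.aestronglyMeasurable (Filter.Eventually.of_forall hζbdd)
    simpa [div_eq_mul_inv, mul_comm, mul_assoc, mul_left_comm] using h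
  refine ⟨hInt, ?_⟩
  -- common value: -∑' n, a n
  set E : ℕ → ℝ := fun n => Real.exp (-(x / (n:ℝ) ^ m)) with hE
  set a : ℕ → ℂ := fun n => LSeries.term M ((p:ℕ) : ℂ) n * (E n : ℂ) with ha
  have hp1 : 1 < (((p:ℕ):ℂ)).re := by
    rw [Complex.natCast_re]
    exact_mod_cast Nat.lt_of_lt_of_le one_lt_two hp
  have hsump : Summable fun n : ℕ => ‖LSeries.term M ((p:ℕ):ℂ) n‖ := hsumM _ hp1
  set F : ℕ → ℕ → ℂ := fun k n =>
    ((-1:ℂ) ^ (k+1) * (x:ℂ) ^ k / (k ! : ℂ)) * LSeries.term M ((m:ℂ) * k + p) n with hFdef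
  have hrek : ∀ k : ℕ, ((m:ℂ) * k + p).re = ((m*k+p : ℕ) : ℝ) := by
    intro k
    push_cast
    simp
  have h1k : ∀ k : ℕ, 1 < ((m:ℂ) * k + p).re := by
    intro k
    rw [hrek k]
    exact_mod_cast Nat.lt_of_lt_of_le one_lt_two (le_trans hp (Nat.le_add_left p (m*k)))
  have hk : ∀ k : ℕ, (-1:ℂ)^(k+1) * (x:ℂ)^k / ((k ! : ℂ) * riemannZeta ((m:ℂ)*k + p))
      = ∑' n : ℕ, F k n := by
    intro k
    rw [div_mul_eq_div_div, div_eq_mul_inv, hzinv _ (h1k k), ← tsum_mul_left]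
  have hsumP : Summable (Function.uncurry F) := by
    apply Summable.of_norm_bounded
      (g := fun q : ℕ × ℕ => (x ^ q.1 / (q.1)! : ℝ) * ‖LSeries.term M ((p:ℕ):ℂ) q.2‖)
    · exact (Real.summable_pow_div_factorial x).mul_of_nonneg hsump
        (fun k => by positivity) (fun n => norm_nonneg _)
    · rintro ⟨k, n⟩
      simp only [Function.uncurry, hFdef]
      rw [norm_mul]
      refine mul_le_mul (le_of_eq ?_) ?_ (norm_nonneg _) (by positivity)
      · rw [norm_div, norm_mul, norm_pow, norm_pow, norm_neg, norm_one, one_pow, one_mul]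
        simp [abs_of_pos hx]
      · refine LSeries.norm_term_le_of_re_le_re M ?_ n
        rw [hrek k, Complex.natCast_re]
        exact_mod_cast Nat.le_add_left p (m*k)
  have hswapA : ∑' (n : ℕ) (k : ℕ), F k n = ∑' (k : ℕ) (n : ℕ), F k n := Summable.tsum_comm hsumP
  have hexp : ∀ w : ℂ, ∑' k : ℕ, w ^ k / (k ! : ℂ) = Complex.exp w := by
    intro w
    rw [Complex.exp_eq_exp_ℂ, NormedSpace.exp_eq_tsum_div]
  have hinner : ∀ n : ℕ, ∑' k : ℕ, F k n = -a n := by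
    intro n
    rcases eq_or_ne n 0 with rfl | hn
    · simp [hFdef, ha, LSeries.term_zero]
    · have hn' : (0:ℝ) < (n:ℝ) := by exact_mod_cast Nat.pos_of_ne_zero hn
      have hnc : ((n:ℕ):ℂ) ≠ 0 := Nat.cast_ne_zero.mpr hn
      set z : ℂ := ((-(x / (n:ℝ) ^ m) : ℝ) : ℂ) with hz
      have hterm : ∀ k : ℕ, F k n = -((z ^ k / (k ! : ℂ)) * LSeries.term M ((p:ℕ):ℂ) n) := by
        intro k
        simp only [hFdef, hz]
        rw [LSeries.term_of_ne_zero hn, LSeries.term_of_ne_zero hn]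
        have hpow : ((n:ℕ):ℂ) ^ ((m:ℂ) * k + (p:ℂ)) = ((n:ℕ):ℂ) ^ (m*k+p : ℕ) := by
          rw [← Complex.cpow_natCast]
          congr 1
          push_cast
          ring
        have hpow2 : ((n:ℕ):ℂ) ^ (((p:ℕ):ℂ)) = ((n:ℕ):ℂ) ^ (p : ℕ) := Complex.cpow_natCast _ _
        rw [hpow, hpow2]
        have hfac : ((k ! : ℕ):ℂ) ≠ 0 := by exact_mod_cast (Nat.factorial_ne_zero k)
        push_cast
        field_simp
        rw [neg_pow ((x:ℂ) / _) k, div_pow, ← pow_mul]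
        field_simp
        ring
      rw [tsum_congr hterm, tsum_neg, tsum_mul_right, hexp z, hz, ← Complex.ofReal_exp]
      simp [ha, hE, mul_comm]
  have hA : ∑' k : ℕ, (-1:ℂ)^(k+1) * (x:ℂ)^k / ((k ! : ℂ) * riemannZeta ((m:ℂ)*(k:ℂ) + (p:ℂ)))
      = -∑' n : ℕ, a n := by
    calc ∑' k : ℕ, (-1:ℂ)^(k+1) * (x:ℂ)^k / ((k ! : ℂ) * riemannZeta ((m:ℂ)*(k:ℂ) + (p:ℂ)))
        = ∑' (k : ℕ) (n : ℕ), F k n := tsum_congr hk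
      _ = ∑' (n : ℕ) (k : ℕ), F k n := hswapA.symm
      _ = ∑' n : ℕ, -a n := tsum_congr hinner
      _ = -∑' n : ℕ, a n := tsum_neg
  -- Part B : the integral
  set H : ℕ → ℝ → ℂ := fun n t =>
      LSeries.term M ((p:ℂ) - m * ((c:ℂ) + t * I)) n *
        (Complex.Gamma ((c:ℂ) + t * I) *
          Complex.exp (-((c:ℂ) + t * I) * (Real.log x : ℂ))) with hH
  have hpt : ∀ t : ℝ, Complex.Gamma ((c:ℂ) + t * I) *
        Complex.exp (-((c:ℂ) + t * I) * (Real.log x : ℂ)) /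
          riemannZeta ((p:ℂ) - m * ((c:ℂ) + t * I)) = ∑' n : ℕ, H n t := by
    intro t
    rw [div_eq_mul_inv, hzinv _ (hne1 t), mul_comm, ← tsum_mul_right]
  have hxn : ∀ n : ℕ, n ≠ 0 → 0 < x / (n:ℝ) ^ m := by
    intro n hn
    have hn' : (0:ℝ) < (n:ℝ) := by exact_mod_cast Nat.pos_of_ne_zero hn
    positivity
  have hHeq : ∀ (n : ℕ), n ≠ 0 → ∀ t : ℝ, H n t
      = LSeries.term M ((p:ℕ):ℂ) n * (Complex.Gamma ((c:ℂ) + t * I) *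
          Complex.exp (-((c:ℂ) + t * I) * ((Real.log (x / (n:ℝ) ^ m)) : ℂ))) := by
    intro n hn t
    have hn' : (0:ℝ) < (n:ℝ) := by exact_mod_cast Nat.pos_of_ne_zero hn
    have hnc : ((n:ℕ):ℂ) ≠ 0 := Nat.cast_ne_zero.mpr hn
    simp only [hH]
    rw [LSeries.term_of_ne_zero hn, LSeries.term_of_ne_zero hn]
    have h1 : ((n:ℕ):ℂ) ^ ((p:ℂ) - m * ((c:ℂ) + t * I))
        = Complex.exp (((p:ℂ) - m * ((c:ℂ) + t * I)) * (Real.log n : ℂ)) := by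
      rw [Complex.cpow_def_of_ne_zero hnc, ← Complex.natCast_log, mul_comm]
    have h2 : ((n:ℕ):ℂ) ^ ((p:ℕ):ℂ) = Complex.exp (((p:ℕ):ℂ) * (Real.log n : ℂ)) := by
      rw [Complex.cpow_def_of_ne_zero hnc, ← Complex.natCast_log, mul_comm]
    have hlog : Real.log (x / (n:ℝ) ^ m) = Real.log x - m * Real.log n := by
      rw [Real.log_div hx.ne' (by positivity), Real.log_pow]
    have hcomb : ∀ u v g : ℂ, M n / Complex.exp u * (g * Complex.exp v)
        = M n * g * Complex.exp (v - u) := by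
      intro u v g
      rw [Complex.exp_sub]
      field_simp [Complex.exp_ne_zero]
    rw [h1, h2, hlog, hcomb, hcomb]
    congr 1
    push_cast
    ring
  have hH_int : ∀ n : ℕ, Integrable (H n) := by
    intro n
    rcases eq_or_ne n 0 with rfl | hn
    · simp only [hH, LSeries.term_zero, zero_mul]
      exact integrable_zero _ _ _
    · exact ((exp_mellin_integrable hc0 (hxn n hn)).const_mul _).congr
        (Filter.Eventually.of_forall fun t => (hHeq n hn t).symm)
  have hH_val : ∀ n : ℕ, (∫ t : ℝ, H n t) = (2 * (Real.pi:ℂ)) * a n := by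
    intro n
    rcases eq_or_ne n 0 with rfl | hn
    · simp [hH, ha, LSeries.term_zero]
    · rw [integral_congr_ae (Filter.Eventually.of_forall (hHeq n hn)),
        integral_const_mul, exp_mellin_inversion hc0 (hxn n hn)]
      simp only [ha, hE]
      ring
  have hHsum : Summable fun n : ℕ => ∫ t : ℝ, ‖H n t‖ := by
    have heq : ∀ n : ℕ, (∫ t : ℝ, ‖H n t‖)
        = ‖LSeries.term M ((σ0:ℝ):ℂ) n‖ * ∫ t : ℝ, ‖Complex.Gamma ((c:ℂ) + t * I) *
            Complex.exp (-((c:ℂ) + t * I) * (Real.log x : ℂ))‖ := by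
      intro n
      rw [← integral_const_mul]
      refine integral_congr_ae (Filter.Eventually.of_forall fun t => ?_)
      simp only [hH]
      rw [norm_mul, hnormt t n]
    simp only [heq]
    exact hsumσ.mul_right _
  have hswapB : ∑' n : ℕ, ∫ t : ℝ, H n t = ∫ t : ℝ, ∑' n : ℕ, H n t :=
    integral_tsum_of_summable_integral_norm hH_int hHsum
  have hBval : (∫ t : ℝ, Complex.Gamma ((c:ℂ) + t * I) *
        Complex.exp (-((c:ℂ) + t * I) * (Real.log x : ℂ)) /
          riemannZeta ((p:ℂ) - m * ((c:ℂ) + t * I)))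
      = (2 * (Real.pi:ℂ)) * ∑' n : ℕ, a n := by
    rw [integral_congr_ae (Filter.Eventually.of_forall hpt), ← hswapB,
      tsum_congr hH_val, tsum_mul_left]
  rw [hA, hBval]
  have hπ : (Real.pi : ℂ) ≠ 0 := by exact_mod_cast Real.pi_ne_zero
  field_simp
end
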